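/- Regularized Mellin evaluation of the boson contraction (the paper's key formula rendered via the Hurwitz zeta function): for all real η > 0 and x > 0 with η·x < 1, the function s ↦ Γ(s) η^s ζ(s, ηx) − (1/2 − ηx)/s, defined for complex s ≠ 0 in a punctured neighborhood of 0, tends as s → 0 (s ≠ 0) to log Γ(ηx) + (ηx − 1/2)(γ_EM − log η) − (1/2) log(2π), where γ_EM is the Euler–Mascheroni constant. (Since ∫_0^∞ t^{s−1} e^{−xt}/(1 − e^{−t/η}) dt = Γ(s) η^s ζ(s, ηx) for Re s > 1, this is precisely the finite part at s = 0 asserted by the regularized formula ∫_C (ln(−λ)/(2πiλ)) e^{−xλ}/(1 − e^{−λ/η}) dλ = ln Γ(ηx) + (ηx − 1/2)(γ − ln η) − (1/2) ln 2π.) -/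

import Mathlib

open HurwitzZeta Filter Topology Set

namespace RMBC

local notation "γ" => Real.eulerMascheroniConstant


noncomputable def logGam : ℝ → ℝ := Real.log ∘ Real.Gamma

lemma diffAt_logGam {x : ℝ} (hx : 0 < x) : DifferentiableAt ℝ logGam x := by
  have h1 : DifferentiableAt ℝ Real.Gamma x :=
    Real.differentiableAt_Gamma (fun m => ne_of_gt (by linarith [Nat.cast_nonneg (α := ℝ) m]))
  exact (Real.differentiableAt_log (Real.Gamma_pos_of_pos hx).ne').comp x h1

lemma hasDerivAt_logGam {x : ℝ} (hx : 0 < x) : HasDerivAt logGam (deriv logGam x) x :=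
  (diffAt_logGam hx).hasDerivAt

lemma logGam_add_one {x : ℝ} (hx : 0 < x) : logGam (x + 1) = Real.log x + logGam x := by
  simp only [logGam, Function.comp_apply, Real.Gamma_add_one hx.ne']
  rw [Real.log_mul hx.ne' (Real.Gamma_pos_of_pos hx).ne']

lemma psi_step {x : ℝ} (hx : 0 < x) :
    deriv logGam (x + 1) = deriv logGam x + 1 / x := by
  have h1 : HasDerivAt (fun y => logGam (y + 1)) (deriv logGam (x + 1)) x := by
    simpa [Function.comp_def] using (hasDerivAt_logGam (by linarith : (0:ℝ) < x + 1)).comp x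
      ((hasDerivAt_id x).add_const 1)
  have h2 : HasDerivAt (fun y => Real.log y + logGam y) (1 / x + deriv logGam x) x := by
    simpa [one_div] using (Real.hasDerivAt_log hx.ne').fun_add (hasDerivAt_logGam hx)
  have h3 : (fun y => logGam (y + 1)) =ᶠ[𝓝 x] (fun y => Real.log y + logGam y) := by
    filter_upwards [eventually_gt_nhds hx] with y hy using logGam_add_one hy
  have := (h2.congr_of_eventuallyEq h3).unique h1
  linarith

lemma psi_nat (n : ℕ) :
    deriv logGam (n + 1) = deriv logGam 1 + (harmonic n : ℝ) := by
  induction n with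
  | zero => simp
  | succ n ih =>
    have h := psi_step (x := n + 1) (by positivity)
    push_cast [harmonic_succ]
    push_cast at h ih
    rw [show ((n:ℝ) + 1 + 1) = (n + 1) + 1 by ring, h, ih]
    ring

lemma psi_lb (n : ℕ) (hn : 1 ≤ n) : Real.log n ≤ deriv logGam (n + 1) := by
  have hx : (0:ℝ) < n := by exact_mod_cast hn
  have hslope := Real.convexOn_log_Gamma.slope_le_deriv (Set.mem_Ioi.2 hx)
    (Set.mem_Ioi.2 (by linarith : (0:ℝ) < n + 1)) (by linarith)
    (diffAt_logGam (by linarith))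
  have : slope logGam n (n+1) = Real.log n := by
    rw [slope_def_field]
    rw [show ((n:ℝ) + 1 - n) = 1 by ring, div_one, logGam_add_one hx]
    ring
  rw [← this]
  exact hslope

lemma psi_ub (n : ℕ) : deriv logGam (n + 1) ≤ Real.log (n + 1) := by
  have hx : (0:ℝ) < n + 1 := by positivity
  have hslope := Real.convexOn_log_Gamma.deriv_le_slope (Set.mem_Ioi.2 hx)
    (Set.mem_Ioi.2 (by linarith : (0:ℝ) < n + 1 + 1)) (by linarith)
    (diffAt_logGam hx)
  have : slope logGam (n+1) (n+1+1) = Real.log (n+1) := by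
    rw [slope_def_field]
    rw [show ((n:ℝ) + 1 + 1 - (n + 1)) = 1 by ring, div_one, logGam_add_one hx]
    ring
  rw [← this]
  exact hslope

lemma psi_one : deriv logGam 1 = -γ := by
  apply le_antisymm
  · -- deriv logGam 1 ≤ log (n+1) - harmonic n = - eulerMascheroniSeq n
    have h1 : ∀ n : ℕ, deriv logGam 1 ≤ -Real.eulerMascheroniSeq n := by
      intro n
      have := psi_ub n
      rw [psi_nat n] at this
      simp only [Real.eulerMascheroniSeq]
      push_cast
      linarith
    exact ge_of_tendsto' Real.tendsto_eulerMascheroniSeq.neg h1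
  · have h1 : ∀ᶠ n : ℕ in atTop, -Real.eulerMascheroniSeq' n ≤ deriv logGam 1 := by
      filter_upwards [eventually_ge_atTop 1] with n hn
      have := psi_lb n hn
      rw [psi_nat n] at this
      simp only [Real.eulerMascheroniSeq']
      rw [if_neg (by omega)]
      linarith
    exact le_of_tendsto Real.tendsto_eulerMascheroniSeq'.neg h1

lemma hasDerivAt_realGamma_one : HasDerivAt Real.Gamma (-γ) 1 := by
  have hd : DifferentiableAt ℝ Real.Gamma 1 :=
    Real.differentiableAt_Gamma (fun m => ne_of_gt (by linarith [Nat.cast_nonneg (α := ℝ) m]))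
  have h1 : HasDerivAt Real.Gamma (deriv Real.Gamma 1) 1 := hd.hasDerivAt
  have h2 : HasDerivAt logGam ((Real.Gamma 1)⁻¹ * deriv Real.Gamma 1) 1 :=
    (Real.hasDerivAt_log (by rw [Real.Gamma_one]; norm_num)).comp 1 h1
  have h3 := (hasDerivAt_logGam one_pos).unique h2
  rw [psi_one, Real.Gamma_one, inv_one, one_mul] at h3
  rwa [← h3] at h1

lemma hasDerivAt_complexGamma_one :
    HasDerivAt Complex.Gamma (-(γ : ℂ)) 1 := by
  have hd : DifferentiableAt ℂ Complex.Gamma 1 := by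
    refine Complex.differentiableAt_Gamma 1 (fun m => ?_)
    intro h
    have : (1:ℂ).re = (-(m:ℂ)).re := by rw [h]
    simp at this
    linarith [Nat.cast_nonneg (α := ℝ) m]
  have h1 : HasDerivAt Complex.Gamma (deriv Complex.Gamma 1) 1 := hd.hasDerivAt
  have h2 : HasDerivAt (fun y : ℝ => Complex.Gamma (y : ℂ)) (deriv Complex.Gamma 1) 1 := by
    have := h1.comp_ofReal (z := 1)
    simpa using this
  have h3 : HasDerivAt (fun y : ℝ => ((Real.Gamma y : ℂ))) ((-γ : ℝ) : ℂ) 1 :=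
    hasDerivAt_realGamma_one.ofReal_comp
  have h4 : (fun y : ℝ => Complex.Gamma (y : ℂ)) = (fun y : ℝ => ((Real.Gamma y : ℂ))) := by
    funext y; exact Complex.Gamma_ofReal y
  rw [h4] at h2
  have := h2.unique h3
  rw [this] at h1
  simpa using h1



noncomputable def g (a : ℝ) (n : ℕ) (s : ℂ) : ℂ :=
  ((((n : ℝ) + a : ℝ) : ℂ) ^ (-s) + (((n : ℝ) + a + 1 : ℝ) : ℂ) ^ (-s)) / 2
    - ((((n : ℝ) + a + 1 : ℝ) : ℂ) ^ (1 - s) - (((n : ℝ) + a : ℝ) : ℂ) ^ (1 - s)) / (1 - s)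

lemma mem_slitPlane_of_pos {c : ℝ} (hc : 0 < c) : ((c : ℂ)) ∈ Complex.slitPlane := by
  rw [Complex.mem_slitPlane_iff]
  left; simpa using hc

/-- derivative in `u` of `u ↦ (c+u)^w`. -/
lemma hasDerivAt_oc {c : ℝ} (w : ℂ) {t : ℝ} (hct : 0 < c + t) :
    HasDerivAt (fun u : ℝ => (((c + u : ℝ)) : ℂ) ^ w)
      (w * ((c + t : ℝ) : ℂ) ^ (w - 1)) t := by
  have h0 : (((c + t : ℝ)) : ℂ) ∈ Complex.slitPlane := mem_slitPlane_of_pos hct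
  have h1 : HasDerivAt (fun y : ℝ => ((y : ℂ)) ^ w) (w * ((c + t : ℝ) : ℂ) ^ (w - 1)) (c + t) :=
    (Complex.hasStrictDerivAt_cpow_const (c := w) h0).hasDerivAt.comp_ofReal
  exact h1.comp_const_add c t

lemma norm_cpow_of_pos {c : ℝ} (hc : 0 < c) (w : ℂ) :
    ‖((c : ℝ) : ℂ) ^ w‖ = c ^ w.re := by
  rw [Complex.norm_cpow_eq_rpow_re_of_pos hc]

lemma g_bound {a : ℝ} (ha : 0 < a) (n : ℕ) {s : ℂ} (hs : s ≠ 1) (hσ : -2 < s.re) :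
    ‖g a n s‖ ≤ ‖s‖ * ‖s + 1‖ * ((n : ℝ) + a) ^ (-s.re - 2) := by
  set c : ℝ := (n : ℝ) + a with hcdef
  have hc : 0 < c := by positivity
  have hs1 : (1 : ℂ) - s ≠ 0 := fun h => hs (by linear_combination -h)
  set f : ℝ → ℂ := fun u => (((c + u : ℝ)) : ℂ) ^ (-s) with hfdef
  set χ : ℝ → ℂ := fun u =>
    (f 0 - f u) / 2 + (u : ℂ) * (-s * (((c + u : ℝ)) : ℂ) ^ (-s - 1)) / 2 with hχdef
  set ψ : ℝ → ℂ := fun u =>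
    (f 0 + f u) * (u : ℂ) / 2 - ((((c + u : ℝ)) : ℂ) ^ (1 - s) - ((c : ℝ) : ℂ) ^ (1 - s)) / (1 - s)
    with hψdef
  -- derivatives
  have hfd : ∀ {t : ℝ}, 0 ≤ t → HasDerivAt f (-s * ((c + t : ℝ) : ℂ) ^ (-s - 1)) t := by
    intro t ht
    exact hasDerivAt_oc (-s) (by linarith)
  have hψd : ∀ {t : ℝ}, 0 ≤ t → HasDerivAt ψ (χ t) t := by
    intro t ht
    have h1 := (((hasDerivAt_const t (f 0)).fun_add (hfd ht)).mul
        (Complex.ofRealCLM.hasDerivAt (x := t))).div_const 2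
    have h2 := ((hasDerivAt_oc (c := c) (1 - s) (by linarith : 0 < c + t)).sub_const
        (((c : ℝ) : ℂ) ^ (1 - s))).div_const (1 - s)
    have h3 := h1.sub h2
    rw [hψdef, hχdef]
    refine h3.congr_deriv ?_
    have he : (1 - s - 1 : ℂ) = -s := by ring
    rw [he]
    simp only [Complex.ofRealCLM_apply, Complex.ofReal_one]
    rw [hfdef]
    field_simp
    ring
  have hχd : ∀ {t : ℝ}, 0 ≤ t → HasDerivAt χ
      ((t : ℂ) * (s * (s + 1) * (((c + t : ℝ)) : ℂ) ^ (-s - 2)) / 2) t := by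
    intro t ht
    have h1 := ((hasDerivAt_const t (f 0)).sub (hfd ht)).div_const 2
    have h2 := ((Complex.ofRealCLM.hasDerivAt (x := t)).mul
        ((hasDerivAt_oc (c := c) (-s - 1) (by linarith : 0 < c + t)).const_mul (-s))).div_const 2
    have h3 := h1.add h2
    rw [hχdef]
    refine h3.congr_deriv ?_
    have he : (-s - 1 - 1 : ℂ) = -s - 2 := by ring
    rw [he]
    simp only [Complex.ofRealCLM_apply, Complex.ofReal_one]
    ring
  -- χ 0 = 0, ψ 0 = 0
  have hχ0 : χ 0 = 0 := by simp [hχdef]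
  have hψ0 : ψ 0 = 0 := by simp [hψdef]
  -- continuity of the χ-derivative
  have hcont : ∀ u : ℝ, 0 ≤ u → ContinuousAt
      (fun t : ℝ => (t : ℂ) * (s * (s + 1) * (((c + t : ℝ)) : ℂ) ^ (-s - 2)) / 2) u := by
    intro u hu
    have hbase : ContinuousAt (fun t : ℝ => (((c + t : ℝ)) : ℂ)) u :=
      Complex.continuous_ofReal.continuousAt.comp ((continuous_const.add continuous_id).continuousAt)
    have hcp0 : ContinuousAt (fun z : ℂ => z ^ (-s - 2)) (((c + u : ℝ) : ℂ)) :=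
      continuousAt_cpow_const (mem_slitPlane_of_pos (by linarith : (0:ℝ) < c + u))
    have hcp : ContinuousAt (fun t : ℝ => (((c + t : ℝ)) : ℂ) ^ (-s - 2)) u := by
      simpa [Function.comp_def] using ContinuousAt.comp (f := fun t : ℝ => (((c + t : ℝ)) : ℂ)) (x := u) hcp0 hbase
    exact ((Complex.continuous_ofReal.continuousAt.mul
      ((continuousAt_const.mul hcp))).div_const 2)
  -- monotone bound
  have hM : ∀ t : ℝ, 0 ≤ t → (((c + t : ℝ))) ^ (-s.re - 2) ≤ c ^ (-s.re - 2) := by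
    intro t ht
    exact Real.rpow_le_rpow_of_nonpos hc (by linarith) (by linarith)
  have hnorm : ∀ t : ℝ, 0 ≤ t →
      ‖(t : ℂ) * (s * (s + 1) * (((c + t : ℝ)) : ℂ) ^ (-s - 2)) / 2‖
        = t * (‖s‖ * ‖s + 1‖ * (c + t) ^ (-s.re - 2)) / 2 := by
    intro t ht
    rw [norm_div, norm_mul, norm_mul, norm_mul, Complex.norm_real,
      Real.norm_of_nonneg ht, norm_cpow_of_pos (by linarith)]
    have : (-s - 2).re = -s.re - 2 := by simp [Complex.sub_re]
    rw [this]
    norm_num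
  have hχbound : ∀ u ∈ Icc (0:ℝ) 1, ‖χ u‖ ≤ ‖s‖ * ‖s + 1‖ * c ^ (-s.re - 2) / 2 := by
    intro u hu
    have hFTC : ∫ t in (0:ℝ)..u, (t : ℂ) * (s * (s + 1) * (((c + t : ℝ)) : ℂ) ^ (-s - 2)) / 2
        = χ u - χ 0 := by
      apply intervalIntegral.integral_eq_sub_of_hasDerivAt
      · intro t ht
        rw [uIcc_of_le hu.1] at ht
        exact hχd ht.1
      · apply ContinuousOn.intervalIntegrable
        intro t ht
        rw [uIcc_of_le hu.1] at ht
        exact (hcont t ht.1).continuousWithinAt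
    rw [← sub_zero (χ u), ← hχ0, ← hFTC]
    have hb := intervalIntegral.norm_integral_le_of_norm_le_const
      (C := ‖s‖ * ‖s + 1‖ * c ^ (-s.re - 2) / 2)
      (f := fun t : ℝ => (t : ℂ) * (s * (s + 1) * (((c + t : ℝ)) : ℂ) ^ (-s - 2)) / 2)
      (a := 0) (b := u) ?_
    · calc _ ≤ ‖s‖ * ‖s + 1‖ * c ^ (-s.re - 2) / 2 * |u - 0| := hb
        _ ≤ _ := by
          rw [sub_zero, abs_of_nonneg hu.1]
          nlinarith [mul_nonneg (mul_nonneg (norm_nonneg s) (norm_nonneg (s+1)))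
            (Real.rpow_nonneg hc.le (-s.re - 2)), hu.2]
    · intro t ht
      rw [uIoc_of_le hu.1, mem_Ioc] at ht
      have ht0 : 0 ≤ t := ht.1.le
      have ht1 : t ≤ 1 := ht.2.trans hu.2
      rw [hnorm t ht0]
      have hA : (0:ℝ) ≤ ‖s‖ * ‖s + 1‖ := by positivity
      have hX0 : (0:ℝ) ≤ (c + t) ^ (-s.re - 2) := Real.rpow_nonneg (by linarith) _
      have hXY : ‖s‖ * ‖s + 1‖ * (c + t) ^ (-s.re - 2) ≤ ‖s‖ * ‖s + 1‖ * c ^ (-s.re - 2) :=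
        mul_le_mul_of_nonneg_left (hM t ht0) hA
      nlinarith [mul_nonneg hA hX0]
  -- now ψ 1 via FTC over χ
  have hFTC2 : ∫ t in (0:ℝ)..1, χ t = ψ 1 - ψ 0 := by
    apply intervalIntegral.integral_eq_sub_of_hasDerivAt
    · intro t ht
      rw [uIcc_of_le zero_le_one] at ht
      exact hψd ht.1
    · apply ContinuousOn.intervalIntegrable
      intro t ht
      rw [uIcc_of_le zero_le_one] at ht
      exact ((hχd ht.1).continuousAt).continuousWithinAt
  have hgψ : g a n s = ψ 1 := by
    rw [hψdef, hfdef, g, hcdef]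
    push_cast
    norm_num
  rw [hgψ, ← sub_zero (ψ 1), ← hψ0, ← hFTC2]
  have hb2 := intervalIntegral.norm_integral_le_of_norm_le_const
    (C := ‖s‖ * ‖s + 1‖ * c ^ (-s.re - 2) / 2) (f := χ) (a := 0) (b := 1) ?_
  · calc _ ≤ ‖s‖ * ‖s + 1‖ * c ^ (-s.re - 2) / 2 * |1 - 0| := hb2
      _ ≤ _ := by
        rw [sub_zero, abs_one, mul_one]
        nlinarith [mul_nonneg (mul_nonneg (norm_nonneg s) (norm_nonneg (s+1)))
          (Real.rpow_nonneg hc.le (-s.re - 2))]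
  · intro t ht
    rw [uIoc_of_le zero_le_one, mem_Ioc] at ht
    exact hχbound t ⟨ht.1.le, ht.2⟩




lemma differentiableAt_g {a : ℝ} (ha : 0 < a) (n : ℕ) {s : ℂ} (hs : s ≠ 1) :
    DifferentiableAt ℂ (g a n) s := by
  have hc : ((((n : ℝ) + a : ℝ)) : ℂ) ≠ 0 := by
    rw [Complex.ofReal_ne_zero]; positivity
  have hd : ((((n : ℝ) + a + 1 : ℝ)) : ℂ) ≠ 0 := by
    rw [Complex.ofReal_ne_zero]; positivity
  have h1s : (1 : ℂ) - s ≠ 0 := fun h => hs (by linear_combination -h)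
  apply DifferentiableAt.sub
  · apply DifferentiableAt.div_const
    exact ((differentiableAt_id.neg).const_cpow (Or.inl hc)).add
      ((differentiableAt_id.neg).const_cpow (Or.inl hd))
  · apply DifferentiableAt.div
    · exact (((differentiableAt_const 1).sub differentiableAt_id).const_cpow (Or.inl hd)).sub
        (((differentiableAt_const 1).sub differentiableAt_id).const_cpow (Or.inl hc))
    · exact (differentiableAt_const 1).sub differentiableAt_id
    · exact h1s

lemma g_zero (a : ℝ) (ha : 0 < a) (n : ℕ) : g a n 0 = 0 := by
  simp only [g, neg_zero, Complex.cpow_zero, sub_zero, Complex.cpow_one]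
  push_cast
  norm_num

noncomputable def gd (a : ℝ) (n : ℕ) : ℝ :=
  -(Real.log ((n : ℝ) + a) + Real.log ((n : ℝ) + a + 1)) / 2
    + ((n : ℝ) + a + 1) * Real.log ((n : ℝ) + a + 1) - ((n : ℝ) + a) * Real.log ((n : ℝ) + a) - 1

lemma hasDerivAt_g_zero {a : ℝ} (ha : 0 < a) (n : ℕ) :
    HasDerivAt (g a n) ((gd a n : ℝ) : ℂ) 0 := by
  set c : ℝ := (n : ℝ) + a with hcdef
  have hc : 0 < c := by positivity
  have hd : 0 < c + 1 := by linarith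
  have hcne : ((c : ℝ) : ℂ) ≠ 0 := by rw [Complex.ofReal_ne_zero]; exact hc.ne'
  have hdne : (((c + 1 : ℝ)) : ℂ) ≠ 0 := by rw [Complex.ofReal_ne_zero]; exact hd.ne'
  have hlogc : Complex.log ((c : ℝ) : ℂ) = ((Real.log c : ℝ) : ℂ) := (Complex.ofReal_log hc.le).symm
  have hlogd : Complex.log (((c + 1 : ℝ)) : ℂ) = ((Real.log (c + 1) : ℝ) : ℂ) :=
    (Complex.ofReal_log hd.le).symm
  have hneg : HasDerivAt (fun s : ℂ => -s) (-1 : ℂ) 0 := (hasDerivAt_id 0).neg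
  have hones : HasDerivAt (fun s : ℂ => 1 - s) (-1 : ℂ) 0 := by
    simpa using (hasDerivAt_const (0:ℂ) 1).fun_sub (hasDerivAt_id 0)
  have h1 : HasDerivAt (fun s : ℂ => ((c : ℝ) : ℂ) ^ (-s))
      (((c : ℝ) : ℂ) ^ (-(0:ℂ)) * Complex.log ((c : ℝ) : ℂ) * (-1)) 0 :=
    hneg.const_cpow (Or.inl hcne)
  have h2 : HasDerivAt (fun s : ℂ => (((c + 1 : ℝ)) : ℂ) ^ (-s))
      ((((c + 1 : ℝ)) : ℂ) ^ (-(0:ℂ)) * Complex.log (((c + 1 : ℝ)) : ℂ) * (-1)) 0 :=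
    hneg.const_cpow (Or.inl hdne)
  have h3 : HasDerivAt (fun s : ℂ => (((c + 1 : ℝ)) : ℂ) ^ (1 - s))
      ((((c + 1 : ℝ)) : ℂ) ^ (1 - (0:ℂ)) * Complex.log (((c + 1 : ℝ)) : ℂ) * (-1)) 0 :=
    hones.const_cpow (Or.inl hdne)
  have h4 : HasDerivAt (fun s : ℂ => ((c : ℝ) : ℂ) ^ (1 - s))
      (((c : ℝ) : ℂ) ^ (1 - (0:ℂ)) * Complex.log ((c : ℝ) : ℂ) * (-1)) 0 :=
    hones.const_cpow (Or.inl hcne)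
  have hnum := h3.fun_sub h4
  have hq := hnum.div hones (by norm_num : (1 : ℂ) - (0:ℂ) ≠ 0)
  have htot := ((h1.add h2).div_const 2).sub hq
  have hgfun : g a n = (fun s : ℂ => ((((c:ℝ)):ℂ) ^ (-s) + (((c + 1 : ℝ)) : ℂ) ^ (-s)) / 2
      - ((((c + 1 : ℝ)) : ℂ) ^ (1 - s) - (((c:ℝ)) : ℂ) ^ (1 - s)) / (1 - s)) := by
    funext s
    rw [g, hcdef]
  rw [hgfun]
  refine htot.congr_deriv ?_
  rw [hlogc, hlogd]
  simp only [neg_zero, Complex.cpow_zero, sub_zero, Complex.cpow_one, gd]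
  rw [hcdef]
  push_cast
  ring
lemma partial_sum_g {a : ℝ} (ha : 0 < a) {s : ℂ} (hs : s ≠ 1) (N : ℕ) :
    ∑ n ∈ Finset.range N, g a n s
      = (∑ n ∈ Finset.range N, (((n : ℝ) + a : ℝ) : ℂ) ^ (-s))
        + (((((N : ℝ) + a : ℝ)) : ℂ) ^ (-s) - ((a : ℝ) : ℂ) ^ (-s)) / 2
        - (((((N : ℝ) + a : ℝ)) : ℂ) ^ (1 - s) - ((a : ℝ) : ℂ) ^ (1 - s)) / (1 - s) := by
  have h1s : (1 : ℂ) - s ≠ 0 := fun h => hs (by linear_combination -h)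
  set F1 : ℕ → ℂ := fun n => (((n : ℝ) + a : ℝ) : ℂ) ^ (-s) with hF1
  set F2 : ℕ → ℂ := fun n => (((n : ℝ) + a : ℝ) : ℂ) ^ (1 - s) with hF2
  have hb : ∀ n : ℕ, (((n : ℝ) + a + 1 : ℝ) : ℂ) = ((((n + 1 : ℕ) : ℝ) + a : ℝ) : ℂ) := by
    intro n; push_cast; ring
  have hterm : ∀ n ∈ Finset.range N, g a n s
      = F1 n + (F1 (n + 1) - F1 n) / 2 - (F2 (n + 1) - F2 n) / (1 - s) := by
    intro n _
    rw [g, hF1, hF2, hb n]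
    ring
  rw [Finset.sum_congr rfl hterm]
  have e1 : ∑ n ∈ Finset.range N, (F1 n + (F1 (n + 1) - F1 n) / 2 - (F2 (n + 1) - F2 n) / (1 - s))
      = (∑ n ∈ Finset.range N, F1 n)
        + (∑ n ∈ Finset.range N, (F1 (n + 1) - F1 n)) / 2
        - (∑ n ∈ Finset.range N, (F2 (n + 1) - F2 n)) / (1 - s) := by
    rw [Finset.sum_sub_distrib, Finset.sum_add_distrib, Finset.sum_div, Finset.sum_div]
  rw [e1, Finset.sum_range_sub F1, Finset.sum_range_sub F2]
  have hF10 : F1 0 = ((a : ℝ) : ℂ) ^ (-s) := by rw [hF1]; norm_num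
  have hF20 : F2 0 = ((a : ℝ) : ℂ) ^ (1 - s) := by rw [hF2]; norm_num
  rw [hF10, hF20]

lemma summable_aux {a p : ℝ} (ha : 0 < a) (hp : 1 < p) :
    Summable (fun n : ℕ => ((n : ℝ) + a) ^ (-p)) := by
  have h := (Real.summable_one_div_nat_add_rpow a p).2 hp
  refine h.congr fun n => ?_
  have hna : (0:ℝ) < (n : ℝ) + a := by positivity
  rw [abs_of_pos hna, one_div, ← Real.rpow_neg hna.le]

lemma rpow_compare {a cR σ σ1 σ2 : ℝ} (ha : 0 < a) (hc : a ≤ cR) (hσ1 : σ1 ≤ σ) (hσ2 : σ ≤ σ2) :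
    cR ^ (-σ - 2) ≤ max 1 (a ^ (σ1 - σ2)) * cR ^ (-σ1 - 2) := by
  have hcpos : 0 < cR := lt_of_lt_of_le ha hc
  have key : cR ^ (σ1 - σ) ≤ max 1 (a ^ (σ1 - σ2)) := by
    rcases le_or_gt 1 cR with h | h
    · exact le_max_of_le_left (Real.rpow_le_one_of_one_le_of_nonpos h (by linarith))
    · refine le_max_of_le_right ?_
      calc cR ^ (σ1 - σ) ≤ cR ^ (σ1 - σ2) :=
            Real.rpow_le_rpow_of_exponent_ge hcpos h.le (by linarith)
        _ ≤ a ^ (σ1 - σ2) := Real.rpow_le_rpow_of_nonpos ha hc (by linarith)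
  calc cR ^ (-σ - 2) = cR ^ (σ1 - σ) * cR ^ (-σ1 - 2) := by
        rw [← Real.rpow_add hcpos]; ring_nf
    _ ≤ max 1 (a ^ (σ1 - σ2)) * cR ^ (-σ1 - 2) :=
        mul_le_mul_of_nonneg_right key (Real.rpow_nonneg hcpos.le _)

lemma key_ball {a : ℝ} (ha : 0 < a) {s₀ : ℂ} (h1 : -(1/2 : ℝ) < s₀.re) (h2 : s₀ ≠ 1) :
    ∃ r > 0, (∀ s ∈ Metric.ball s₀ r, s ≠ 1 ∧ -(1/2 : ℝ) < s.re) ∧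
      TendstoUniformlyOn (fun N s => ∑ n ∈ Finset.range N, g a n s)
        (fun s => ∑' n, g a n s) atTop (Metric.ball s₀ r) := by
  set r : ℝ := min ((s₀.re + 1/2) / 2) (‖s₀ - 1‖ / 2) with hrdef
  have hr0 : 0 < r := by
    apply lt_min
    · linarith
    · simpa [norm_pos_iff, sub_ne_zero] using h2
  set σ1 : ℝ := s₀.re - r with hσ1def
  set σ2 : ℝ := s₀.re + r with hσ2def
  have hσ1 : -(1/2 : ℝ) < σ1 := by
    have : r ≤ (s₀.re + 1/2) / 2 := min_le_left _ _
    rw [hσ1def]; linarith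
  have hball : ∀ s ∈ Metric.ball s₀ r, s ≠ 1 ∧ -(1/2 : ℝ) < s.re ∧
      σ1 ≤ s.re ∧ s.re ≤ σ2 ∧ ‖s‖ ≤ ‖s₀‖ + r := by
    intro s hsb
    rw [Metric.mem_ball, dist_eq_norm] at hsb
    have hre : |s.re - s₀.re| ≤ ‖s - s₀‖ := by
      simpa using Complex.abs_re_le_norm (s - s₀)
    rw [abs_le] at hre
    refine ⟨?_, ?_, ?_, ?_, ?_⟩
    · intro h
      rw [h] at hsb
      have : ‖s₀ - 1‖ ≤ r := by
        rw [show s₀ - 1 = -(1 - s₀) by ring, norm_neg]; exact hsb.le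
      have : r ≤ ‖s₀ - 1‖ / 2 := min_le_right _ _
      have h3 : 0 < ‖s₀ - 1‖ := by simpa [norm_pos_iff, sub_ne_zero] using h2
      linarith [min_le_right ((s₀.re + 1/2) / 2) (‖s₀ - 1‖ / 2),
        (show ‖s₀ - 1‖ ≤ r from by rw [show s₀ - 1 = -(1 - s₀) by ring, norm_neg]; exact hsb.le)]
    · rw [hσ1def] at hσ1; linarith [hre.1, hsb.le]
    · rw [hσ1def]; linarith [hre.1, hsb.le]
    · rw [hσ2def]; linarith [hre.2, hsb.le]
    · calc ‖s‖ = ‖s₀ + (s - s₀)‖ := by ring_nf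
        _ ≤ ‖s₀‖ + ‖s - s₀‖ := norm_add_le _ _
        _ ≤ ‖s₀‖ + r := by linarith [hsb.le]
  refine ⟨r, hr0, fun s hs => ⟨(hball s hs).1, (hball s hs).2.1⟩, ?_⟩
  set R : ℝ := ‖s₀‖ + r with hRdef
  have hR0 : 0 ≤ R := by positivity
  apply tendstoUniformlyOn_tsum_nat
    (u := fun n => R * (R + 1) * max 1 (a ^ (σ1 - σ2)) * ((n : ℝ) + a) ^ (-σ1 - 2))
  · apply Summable.mul_left
    have : 1 < σ1 + 2 := by linarith
    have h := summable_aux ha this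
    refine h.congr fun n => ?_
    ring_nf
  · intro n s hs
    obtain ⟨hne, -, hsl, hsu, hsn⟩ := hball s hs
    have hb := g_bound ha n hne (by linarith : (-2:ℝ) < s.re)
    refine hb.trans ?_
    have hcomp : ((n : ℝ) + a) ^ (-s.re - 2)
        ≤ max 1 (a ^ (σ1 - σ2)) * ((n : ℝ) + a) ^ (-σ1 - 2) :=
      rpow_compare ha (by linarith [Nat.cast_nonneg (α := ℝ) n]) hsl hsu
    have hs1n : ‖s + 1‖ ≤ R + 1 := by
      calc ‖s + 1‖ ≤ ‖s‖ + 1 := norm_add_le s 1 |>.trans (by norm_num)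
        _ ≤ R + 1 := by linarith
    calc ‖s‖ * ‖s + 1‖ * ((n : ℝ) + a) ^ (-s.re - 2)
        ≤ R * (R + 1) * (max 1 (a ^ (σ1 - σ2)) * ((n : ℝ) + a) ^ (-σ1 - 2)) := by
          apply mul_le_mul
          · exact mul_le_mul hsn hs1n (norm_nonneg _) hR0
          · exact hcomp
          · exact Real.rpow_nonneg (by positivity) _
          · positivity
      _ = R * (R + 1) * max 1 (a ^ (σ1 - σ2)) * ((n : ℝ) + a) ^ (-σ1 - 2) := by ring

lemma differentiableAt_gsum {a : ℝ} (ha : 0 < a) {s₀ : ℂ} (h1 : -(1/2 : ℝ) < s₀.re)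
    (h2 : s₀ ≠ 1) : DifferentiableAt ℂ (fun s => ∑' n, g a n s) s₀ := by
  obtain ⟨r, hr0, hmem, hunif⟩ := key_ball ha h1 h2
  have htlu : TendstoLocallyUniformlyOn (fun N s => ∑ n ∈ Finset.range N, g a n s)
      (fun s => ∑' n, g a n s) atTop (Metric.ball s₀ r) :=
    hunif.tendstoLocallyUniformlyOn
  have hdiff : ∀ᶠ N in (atTop : Filter ℕ), DifferentiableOn ℂ
      (fun s => ∑ n ∈ Finset.range N, g a n s) (Metric.ball s₀ r) := by
    filter_upwards with N
    intro s hs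
    exact (DifferentiableAt.fun_sum (fun n _ => differentiableAt_g ha n (hmem s hs).1)).differentiableWithinAt
  have := htlu.differentiableOn hdiff Metric.isOpen_ball
  exact (this s₀ (Metric.mem_ball_self hr0)).differentiableAt
    (Metric.isOpen_ball.mem_nhds (Metric.mem_ball_self hr0))

lemma deriv_gsum_zero {a : ℝ} (ha : 0 < a) (ha1 : a < 1) {L : ℂ}
    (hL : Tendsto (fun N => ∑ n ∈ Finset.range N, deriv (g a n) 0) atTop (𝓝 L)) :
    HasDerivAt (fun s => ∑' n, g a n s) L 0 := by
  have h1 : -(1/2 : ℝ) < (0 : ℂ).re := by norm_num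
  have h2 : (0 : ℂ) ≠ 1 := by norm_num
  obtain ⟨r, hr0, hmem, hunif⟩ := key_ball ha h1 h2
  have htlu : TendstoLocallyUniformlyOn (fun N s => ∑ n ∈ Finset.range N, g a n s)
      (fun s => ∑' n, g a n s) atTop (Metric.ball 0 r) :=
    hunif.tendstoLocallyUniformlyOn
  have hdiff : ∀ᶠ N in (atTop : Filter ℕ), DifferentiableOn ℂ
      (fun s => ∑ n ∈ Finset.range N, g a n s) (Metric.ball 0 r) := by
    filter_upwards with N
    intro s hs
    exact (DifferentiableAt.fun_sum (fun n _ => differentiableAt_g ha n (hmem s hs).1)).differentiableWithinAt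
  have hderivs := (htlu.deriv hdiff Metric.isOpen_ball).tendsto_at (Metric.mem_ball_self hr0)
  -- deriv of partial sums at 0
  have hps : ∀ N : ℕ, deriv (fun s => ∑ n ∈ Finset.range N, g a n s) 0
      = ∑ n ∈ Finset.range N, deriv (g a n) 0 := by
    intro N
    apply HasDerivAt.deriv
    apply HasDerivAt.fun_sum
    intro n _
    exact ((differentiableAt_g ha n h2).hasDerivAt)
  simp only [Function.comp_def, hps] at hderivs
  have hD : DifferentiableAt ℂ (fun s => ∑' n, g a n s) 0 := differentiableAt_gsum ha h1 h2
  have : deriv (fun s => ∑' n, g a n s) 0 = L := tendsto_nhds_unique hderivs hL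
  rw [← this]
  exact hD.hasDerivAt

noncomputable def Ffun (a : ℝ) (s : ℂ) : ℂ :=
  ((a : ℝ) : ℂ) ^ (-s) / 2 + ((a : ℝ) : ℂ) ^ (1 - s) / (s - 1) + ∑' n, g a n s


lemma summable_g {a : ℝ} (ha : 0 < a) {s : ℂ} (hs : s ≠ 1) (hσ : -(1/2:ℝ) < s.re) :
    Summable (fun n => g a n s) := by
  refine Summable.of_norm_bounded (g := fun n => ‖s‖ * ‖s + 1‖ * ((n : ℝ) + a) ^ (-(s.re + 2)))
    ((summable_aux ha (by linarith)).mul_left _) (fun n => ?_)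
  have := g_bound ha n hs (by linarith)
  simpa [show -s.re - 2 = -(s.re + 2) by ring] using this

lemma tendsto_cpow_zero {a : ℝ} (ha : 0 < a) {w : ℂ} (hw : w.re < 0) :
    Tendsto (fun N : ℕ => ((((N : ℝ) + a : ℝ)) : ℂ) ^ w) atTop (𝓝 0) := by
  rw [tendsto_zero_iff_norm_tendsto_zero]
  have heq : ∀ N : ℕ, ‖((((N : ℝ) + a : ℝ)) : ℂ) ^ w‖ = ((N : ℝ) + a) ^ w.re := by
    intro N
    exact norm_cpow_of_pos (by positivity) w
  simp only [heq]
  have h1 : Tendsto (fun N : ℕ => (N : ℝ) + a) atTop atTop :=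
    tendsto_atTop_add_const_right _ a tendsto_natCast_atTop_atTop
  have h2 : Tendsto (fun x : ℝ => x ^ (-(-w.re))) atTop (𝓝 0) :=
    tendsto_rpow_neg_atTop (by linarith)
  simpa [Function.comp_def] using h2.comp h1

lemma Ffun_eq_hurwitz {a : ℝ} (ha : 0 < a) (ha1 : a ≤ 1) {s : ℂ} (hσ : 1 < s.re) :
    Ffun a s = hurwitzZeta (↑a : UnitAddCircle) s := by
  have hs : s ≠ 1 := by
    intro h; rw [h] at hσ; simp at hσ
  have h1s : (1 : ℂ) - s ≠ 0 := fun h => hs (by linear_combination -h)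
  have hZ : HasSum (fun n : ℕ => 1 / ((n : ℂ) + a) ^ s) (hurwitzZeta (↑a : UnitAddCircle) s) :=
    hasSum_hurwitzZeta_of_one_lt_re ⟨ha.le, ha1⟩ hσ
  have hterm : (fun n : ℕ => 1 / ((n : ℂ) + a) ^ s)
      = (fun n : ℕ => (((n : ℝ) + a : ℝ) : ℂ) ^ (-s)) := by
    funext n
    rw [Complex.cpow_neg, one_div]
    congr 2
    push_cast; ring
  rw [hterm] at hZ
  have hS : Summable (fun n => g a n s) := summable_g ha hs (by linarith)
  have hTS : Tendsto (fun N => ∑ n ∈ Finset.range N, g a n s) atTop (𝓝 (∑' n, g a n s)) :=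
    hS.hasSum.tendsto_sum_nat
  have hT2 : Tendsto (fun N => ∑ n ∈ Finset.range N, (((n : ℝ) + a : ℝ) : ℂ) ^ (-s)) atTop
      (𝓝 (hurwitzZeta (↑a : UnitAddCircle) s)) := hZ.tendsto_sum_nat
  have t1 : Tendsto (fun N : ℕ => ((((N : ℝ) + a : ℝ)) : ℂ) ^ (-s)) atTop (𝓝 0) :=
    tendsto_cpow_zero ha (by simp only [Complex.neg_re]; linarith)
  have t2 : Tendsto (fun N : ℕ => ((((N : ℝ) + a : ℝ)) : ℂ) ^ (1 - s)) atTop (𝓝 0) :=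
    tendsto_cpow_zero ha (by simp only [Complex.sub_re, Complex.one_re]; linarith)
  have hcomb : Tendsto (fun N => (∑ n ∈ Finset.range N, (((n : ℝ) + a : ℝ) : ℂ) ^ (-s))
        + (((((N : ℝ) + a : ℝ)) : ℂ) ^ (-s) - ((a : ℝ) : ℂ) ^ (-s)) / 2
        - (((((N : ℝ) + a : ℝ)) : ℂ) ^ (1 - s) - ((a : ℝ) : ℂ) ^ (1 - s)) / (1 - s)) atTop
      (𝓝 (hurwitzZeta (↑a : UnitAddCircle) s + (0 - ((a : ℝ) : ℂ) ^ (-s)) / 2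
        - (0 - ((a : ℝ) : ℂ) ^ (1 - s)) / (1 - s))) :=
    (hT2.add ((t1.sub_const _).div_const 2)).sub ((t2.sub_const _).div_const (1 - s))
  have hTS2 : Tendsto (fun N => ∑ n ∈ Finset.range N, g a n s) atTop
      (𝓝 (hurwitzZeta (↑a : UnitAddCircle) s + (0 - ((a : ℝ) : ℂ) ^ (-s)) / 2
        - (0 - ((a : ℝ) : ℂ) ^ (1 - s)) / (1 - s))) := by
    apply hcomb.congr
    intro N
    exact (partial_sum_g ha hs N).symm
  have htsum := tendsto_nhds_unique hTS hTS2
  rw [Ffun, htsum]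
  have hs1 : s - 1 ≠ 0 := sub_ne_zero.2 hs
  field_simp
  ring

lemma isPreconnected_U : IsPreconnected {s : ℂ | -(1/2 : ℝ) < s.re ∧ s ≠ 1} := by
  have hA : Convex ℝ {s : ℂ | -(1/2 : ℝ) < s.re ∧ 0 < s.im} :=
    (convex_halfSpace_re_gt _).inter (convex_halfSpace_im_gt _)
  have hB : Convex ℝ {s : ℂ | -(1/2 : ℝ) < s.re ∧ s.im < 0} :=
    (convex_halfSpace_re_gt _).inter (convex_halfSpace_im_lt _)
  have hC : Convex ℝ {s : ℂ | -(1/2 : ℝ) < s.re ∧ s.re < 1} :=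
    (convex_halfSpace_re_gt _).inter (convex_halfSpace_re_lt _)
  have hD : Convex ℝ {s : ℂ | (1 : ℝ) < s.re} := convex_halfSpace_re_gt _
  -- chain the unions
  have hAD : IsPreconnected ({s : ℂ | -(1/2 : ℝ) < s.re ∧ 0 < s.im} ∪ {s : ℂ | (1:ℝ) < s.re}) := by
    apply IsPreconnected.union (2 + Complex.I)
    · constructor <;> · simp; try norm_num
    · simp
    · exact hA.isPreconnected
    · exact hD.isPreconnected
  have hADC : IsPreconnected (({s : ℂ | -(1/2 : ℝ) < s.re ∧ 0 < s.im} ∪ {s : ℂ | (1:ℝ) < s.re})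
      ∪ {s : ℂ | -(1/2 : ℝ) < s.re ∧ s.re < 1}) := by
    apply IsPreconnected.union (Complex.I / 2)
    · left; constructor <;> · simp; try norm_num
    · constructor <;> · simp; try norm_num
    · exact hAD
    · exact hC.isPreconnected
  have hfull : IsPreconnected ((({s : ℂ | -(1/2 : ℝ) < s.re ∧ 0 < s.im}
      ∪ {s : ℂ | (1:ℝ) < s.re}) ∪ {s : ℂ | -(1/2 : ℝ) < s.re ∧ s.re < 1})
      ∪ {s : ℂ | -(1/2 : ℝ) < s.re ∧ s.im < 0}) := by
    apply IsPreconnected.union (-Complex.I / 2)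
    · right; constructor <;> · simp; try norm_num
    · constructor <;> · simp; try norm_num
    · exact hADC
    · exact hB.isPreconnected
  have hset : {s : ℂ | -(1/2 : ℝ) < s.re ∧ s ≠ 1}
      = ((({s : ℂ | -(1/2 : ℝ) < s.re ∧ 0 < s.im} ∪ {s : ℂ | (1:ℝ) < s.re})
        ∪ {s : ℂ | -(1/2 : ℝ) < s.re ∧ s.re < 1})
        ∪ {s : ℂ | -(1/2 : ℝ) < s.re ∧ s.im < 0}) := by
    ext s
    simp only [mem_setOf_eq, mem_union]
    constructor
    · rintro ⟨hre, hne⟩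
      rcases lt_trichotomy s.im 0 with him | him | him
      · right; exact ⟨hre, him⟩
      · rcases lt_or_ge s.re 1 with h1 | h1
        · left; right; exact ⟨hre, h1⟩
        · left; left; right
          rcases h1.lt_or_eq with h2 | h2
          · exact h2
          · exfalso; apply hne
            apply Complex.ext <;> simp [← h2, him]
      · left; left; left; exact ⟨hre, him⟩
    · rintro (((⟨h1, h2⟩ | h1) | ⟨h1, h2⟩) | ⟨h1, h2⟩)
      · exact ⟨h1, fun h => by rw [h] at h2; simp at h2⟩
      · refine ⟨by linarith, fun h => by rw [h] at h1; simp at h1⟩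
      · exact ⟨h1, fun h => by rw [h] at h2; simp at h2⟩
      · exact ⟨h1, fun h => by rw [h] at h2; simp at h2⟩
  rw [hset]
  exact hfull

lemma sum_gd {a : ℝ} (ha : 0 < a) (N : ℕ) :
    ∑ n ∈ Finset.range N, gd a n
      = -(∑ n ∈ Finset.range N, Real.log ((n : ℝ) + a))
        - (Real.log ((N : ℝ) + a) - Real.log a) / 2
        + ((N : ℝ) + a) * Real.log ((N : ℝ) + a) - a * Real.log a - N := by
  set φ : ℕ → ℝ := fun n => ((n : ℝ) + a) * Real.log ((n : ℝ) + a) with hφ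
  set L : ℕ → ℝ := fun n => Real.log ((n : ℝ) + a) with hL
  have hterm : ∀ n ∈ Finset.range N, gd a n
      = (φ (n + 1) - φ n) - (L (n + 1) - L n) / 2 - L n - 1 := by
    intro n _
    have hcast : ((n : ℝ) + a + 1) = (((n + 1 : ℕ) : ℝ) + a) := by push_cast; ring
    rw [gd, hφ, hL]
    simp only
    rw [hcast]
    ring
  rw [Finset.sum_congr rfl hterm]
  have e1 : ∑ n ∈ Finset.range N, ((φ (n + 1) - φ n) - (L (n + 1) - L n) / 2 - L n - 1)
      = (∑ n ∈ Finset.range N, (φ (n + 1) - φ n))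
        - (∑ n ∈ Finset.range N, (L (n + 1) - L n)) / 2
        - (∑ n ∈ Finset.range N, L n) - N := by
    rw [Finset.sum_sub_distrib, Finset.sum_sub_distrib, Finset.sum_sub_distrib,
      Finset.sum_div, Finset.sum_const, Finset.card_range, nsmul_eq_mul, mul_one]
  rw [e1, Finset.sum_range_sub φ, Finset.sum_range_sub L]
  have hφ0 : φ 0 = a * Real.log a := by rw [hφ]; norm_num
  have hL0 : L 0 = Real.log a := by rw [hL]; norm_num
  rw [hφ0, hL0]
  have hφN : φ N = ((N : ℝ) + a) * Real.log ((N : ℝ) + a) := rfl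
  have hLN : L N = Real.log ((N : ℝ) + a) := rfl
  rw [hφN, hLN]
  ring

lemma tendsto_sum_gd {a : ℝ} (ha : 0 < a) :
    Tendsto (fun N => ∑ n ∈ Finset.range N, gd a n) atTop
      (𝓝 (Real.log (Real.Gamma a) - Real.log (2 * Real.pi) / 2 + a
        + Real.log a / 2 - a * Real.log a)) := by
  -- limit pieces
  have hlg : Tendsto (Real.BohrMollerup.logGammaSeq a) atTop (𝓝 (Real.log (Real.Gamma a))) :=
    Real.BohrMollerup.tendsto_log_gamma ha
  have hst : Tendsto (fun N : ℕ => Real.log (Stirling.stirlingSeq N)) atTop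
      (𝓝 (Real.log Real.pi / 2)) := by
    have h1 : Tendsto (fun N : ℕ => Real.log (Stirling.stirlingSeq N)) atTop
        (𝓝 (Real.log (Real.sqrt Real.pi))) := by
      apply (Real.continuousAt_log ?_).tendsto.comp Stirling.tendsto_stirlingSeq_sqrt_pi
      positivity
    rwa [Real.log_sqrt Real.pi_pos.le] at h1
  have hdiv0 : Tendsto (fun N : ℕ => a / (N : ℝ)) atTop (𝓝 0) :=
    tendsto_const_div_atTop_nhds_zero_nat a
  have hlog0 : Tendsto (fun N : ℕ => Real.log (1 + a / N)) atTop (𝓝 0) := by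
    have h1 : Tendsto (fun N : ℕ => 1 + a / (N : ℝ)) atTop (𝓝 1) := by
      simpa using (tendsto_const_nhds (x := (1:ℝ))).add hdiv0
    have h2 := (Real.continuousAt_log one_ne_zero).tendsto.comp h1
    simpa [Function.comp_def] using h2
  have hmul : Tendsto (fun N : ℕ => (N : ℝ) * Real.log (1 + a / N)) atTop (𝓝 a) :=
    (Real.tendsto_mul_log_one_add_div_atTop a).comp tendsto_natCast_atTop_atTop
  -- combination
  have hcomb : Tendsto (fun N : ℕ =>
      (Real.BohrMollerup.logGammaSeq a N - Real.log (Stirling.stirlingSeq N)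
        - (Real.log 2 / 2 - Real.log a / 2 + a * Real.log a))
        + Real.log (1 + a / N) / 2 + ((N : ℝ) * Real.log (1 + a / N) + a * Real.log (1 + a / N)))
      atTop (𝓝 ((Real.log (Real.Gamma a) - Real.log Real.pi / 2
        - (Real.log 2 / 2 - Real.log a / 2 + a * Real.log a)) + 0 / 2 + (a + a * 0))) := by
    exact (((hlg.sub hst).sub_const _).add (hlog0.div_const 2)).add
      (hmul.add (hlog0.const_mul a))
  have hval : (Real.log (Real.Gamma a) - Real.log Real.pi / 2
        - (Real.log 2 / 2 - Real.log a / 2 + a * Real.log a)) + 0 / 2 + (a + a * 0)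
      = Real.log (Real.Gamma a) - Real.log (2 * Real.pi) / 2 + a
        + Real.log a / 2 - a * Real.log a := by
    rw [Real.log_mul two_ne_zero Real.pi_pos.ne']
    ring
  rw [hval] at hcomb
  apply hcomb.congr'
  filter_upwards [eventually_ge_atTop 1] with N hN
  have hN0 : (0 : ℝ) < N := by exact_mod_cast hN
  have hNa : (0 : ℝ) < (N : ℝ) + a := by linarith
  -- identities
  have h2N : Real.log (2 * N) = Real.log 2 + Real.log N := Real.log_mul two_ne_zero hN0.ne'
  have hNe : Real.log ((N : ℝ) / Real.exp 1) = Real.log N - 1 := by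
    rw [Real.log_div hN0.ne' (Real.exp_ne_zero 1), Real.log_exp]
  have h1aN : Real.log (1 + a / N) = Real.log ((N : ℝ) + a) - Real.log N := by
    rw [show (1 : ℝ) + a / N = ((N : ℝ) + a) / N by field_simp,
      Real.log_div hNa.ne' hN0.ne']
  have hlsf := Stirling.log_stirlingSeq_formula N
  have hlgs : Real.BohrMollerup.logGammaSeq a N
      = a * Real.log N + Real.log (Nat.factorial N)
        - ((∑ m ∈ Finset.range N, Real.log ((m : ℝ) + a)) + Real.log ((N : ℝ) + a)) := by
    rw [Real.BohrMollerup.logGammaSeq, Finset.sum_range_succ]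
    congr 1
    congr 1
    · exact Finset.sum_congr rfl fun m _ => by rw [add_comm]
    · rw [add_comm]
  rw [sum_gd ha, hlgs, hlsf, h2N, hNe, h1aN]
  ring
lemma isOpen_U : IsOpen {s : ℂ | -(1/2 : ℝ) < s.re ∧ s ≠ 1} := by
  have h1 : IsOpen {s : ℂ | -(1/2 : ℝ) < s.re} := isOpen_lt continuous_const Complex.continuous_re
  have h2 : IsOpen {s : ℂ | s ≠ 1} := isOpen_ne
  exact h1.inter h2

lemma differentiableAt_Ffun {a : ℝ} (ha : 0 < a) {s : ℂ} (h1 : -(1/2 : ℝ) < s.re)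
    (h2 : s ≠ 1) : DifferentiableAt ℂ (Ffun a) s := by
  have hane : ((a : ℝ) : ℂ) ≠ 0 := by rw [Complex.ofReal_ne_zero]; exact ha.ne'
  apply DifferentiableAt.add
  apply DifferentiableAt.add
  · exact (differentiableAt_id.neg.const_cpow (Or.inl hane)).div_const 2
  · exact (((differentiableAt_const 1).sub differentiableAt_id).const_cpow (Or.inl hane)).div
      (differentiableAt_id.sub_const 1) (sub_ne_zero.2 h2)
  · exact differentiableAt_gsum ha h1 h2

lemma eqOn_hurwitz_Ffun {a : ℝ} (ha : 0 < a) (ha1 : a < 1) :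
    Set.EqOn (hurwitzZeta (↑a : UnitAddCircle)) (Ffun a)
      {s : ℂ | -(1/2 : ℝ) < s.re ∧ s ≠ 1} := by
  have hAn1 : AnalyticOnNhd ℂ (hurwitzZeta (↑a : UnitAddCircle))
      {s : ℂ | -(1/2 : ℝ) < s.re ∧ s ≠ 1} := by
    apply DifferentiableOn.analyticOnNhd _ isOpen_U
    exact fun s hs => (differentiableAt_hurwitzZeta _ hs.2).differentiableWithinAt
  have hAn2 : AnalyticOnNhd ℂ (Ffun a) {s : ℂ | -(1/2 : ℝ) < s.re ∧ s ≠ 1} := by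
    apply DifferentiableOn.analyticOnNhd _ isOpen_U
    exact fun s hs => (differentiableAt_Ffun ha hs.1 hs.2).differentiableWithinAt
  refine hAn1.eqOn_of_preconnected_of_eventuallyEq hAn2 isPreconnected_U
    (z₀ := 2) ⟨by norm_num, by norm_num⟩ ?_
  have hnb : {s : ℂ | 1 < s.re} ∈ 𝓝 (2 : ℂ) :=
    (isOpen_lt continuous_const Complex.continuous_re).mem_nhds (by norm_num)
  filter_upwards [hnb] with s hs
  exact (Ffun_eq_hurwitz ha ha1.le hs).symm

lemma hasDerivAt_Ffun_zero {a : ℝ} (ha : 0 < a) (ha1 : a < 1) :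
    HasDerivAt (Ffun a)
      ((Real.log (Real.Gamma a) - Real.log (2 * Real.pi) / 2 : ℝ) : ℂ) 0 := by
  have hane : ((a : ℝ) : ℂ) ≠ 0 := by rw [Complex.ofReal_ne_zero]; exact ha.ne'
  have hloga : Complex.log ((a : ℝ) : ℂ) = ((Real.log a : ℝ) : ℂ) :=
    (Complex.ofReal_log ha.le).symm
  have hneg : HasDerivAt (fun s : ℂ => -s) (-1 : ℂ) 0 := (hasDerivAt_id 0).neg
  have honess : HasDerivAt (fun s : ℂ => 1 - s) (-1 : ℂ) 0 := by
    simpa using (hasDerivAt_const (0 : ℂ) 1).fun_sub (hasDerivAt_id 0)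
  have h1 : HasDerivAt (fun s : ℂ => ((a : ℝ) : ℂ) ^ (-s) / 2)
      ((((a : ℝ) : ℂ) ^ (-(0:ℂ)) * Complex.log ((a : ℝ) : ℂ) * (-1)) / 2) 0 :=
    (hneg.const_cpow (Or.inl hane)).div_const 2
  have h2num : HasDerivAt (fun s : ℂ => ((a : ℝ) : ℂ) ^ (1 - s))
      (((a : ℝ) : ℂ) ^ (1 - (0:ℂ)) * Complex.log ((a : ℝ) : ℂ) * (-1)) 0 :=
    honess.const_cpow (Or.inl hane)
  have h2den : HasDerivAt (fun s : ℂ => s - 1) (1 : ℂ) 0 := (hasDerivAt_id 0).sub_const 1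
  have h2 := h2num.div h2den (by norm_num : (0:ℂ) - 1 ≠ 0)
  -- series part
  have hsum : Tendsto (fun N => ∑ n ∈ Finset.range N, deriv (g a n) 0) atTop
      (𝓝 ((Real.log (Real.Gamma a) - Real.log (2 * Real.pi) / 2 + a
        + Real.log a / 2 - a * Real.log a : ℝ) : ℂ)) := by
    have heq : ∀ N, ∑ n ∈ Finset.range N, deriv (g a n) 0
        = ((∑ n ∈ Finset.range N, gd a n : ℝ) : ℂ) := by
      intro N
      rw [Complex.ofReal_sum]
      exact Finset.sum_congr rfl fun n _ => (hasDerivAt_g_zero ha n).deriv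
    simp only [heq]
    exact (Complex.continuous_ofReal.tendsto _).comp (tendsto_sum_gd ha)
  have h3 : HasDerivAt (fun s => ∑' n, g a n s)
      ((Real.log (Real.Gamma a) - Real.log (2 * Real.pi) / 2 + a
        + Real.log a / 2 - a * Real.log a : ℝ) : ℂ) 0 := deriv_gsum_zero ha ha1 hsum
  have htot := (h1.add h2).add h3
  have : Ffun a = fun s => (((a : ℝ) : ℂ) ^ (-s) / 2 + ((a : ℝ) : ℂ) ^ (1 - s) / (s - 1))
      + ∑' n, g a n s := by
    funext s; rw [Ffun]
  rw [this]
  refine htot.congr_deriv ?_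
  rw [hloga]
  simp only [neg_zero, Complex.cpow_zero, sub_zero, Complex.cpow_one]
  push_cast
  field_simp
  ring

lemma Ffun_zero {a : ℝ} (ha : 0 < a) : Ffun a 0 = 1 / 2 - (a : ℂ) := by
  rw [Ffun]
  have h1 : ∑' n, g a n 0 = 0 := by
    rw [tsum_congr (fun n => g_zero a ha n), tsum_zero]
  rw [h1]
  simp only [neg_zero, Complex.cpow_zero, sub_zero, Complex.cpow_one]
  ring

theorem main (η x : ℝ) (hη : 0 < η) (hx : 0 < x)
    (hηx : η * x < 1) :
    Tendsto
      (fun s : ℂ =>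
        Complex.Gamma s * Complex.exp (s * (Real.log η : ℂ))
            * hurwitzZeta (↑(η * x) : UnitAddCircle) s
          - ((1 / 2 : ℂ) - (η * x : ℝ)) / s)
      (𝓝[≠] 0)
      (𝓝 ((Real.log (Real.Gamma (η * x))
          + (η * x - 1 / 2) * (Real.eulerMascheroniConstant - Real.log η)
          - (1 / 2) * Real.log (2 * Real.pi) : ℝ) : ℂ)) := by
  set a : ℝ := η * x with hadef
  have ha : 0 < a := mul_pos hη hx
  have ha1 : a < 1 := hηx
  -- properties of hurwitzZeta near 0
  have hU0 : {s : ℂ | -(1/2 : ℝ) < s.re ∧ s ≠ 1} ∈ 𝓝 (0 : ℂ) := by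
    apply isOpen_U.mem_nhds
    constructor
    · norm_num
    · norm_num
  have hEq := eqOn_hurwitz_Ffun ha ha1
  have hev : hurwitzZeta (↑a : UnitAddCircle) =ᶠ[𝓝 (0:ℂ)] Ffun a :=
    Filter.eventuallyEq_of_mem hU0 hEq
  have hZ0 : hurwitzZeta (↑a : UnitAddCircle) 0 = 1 / 2 - (a : ℂ) := by
    rw [hEq (by constructor <;> norm_num), Ffun_zero ha]
  have hZd : HasDerivAt (hurwitzZeta (↑a : UnitAddCircle))
      ((Real.log (Real.Gamma a) - Real.log (2 * Real.pi) / 2 : ℝ) : ℂ) 0 :=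
    (hasDerivAt_Ffun_zero ha ha1).congr_of_eventuallyEq hev
  -- factors
  have hp : HasDerivAt (fun s : ℂ => Complex.Gamma (s + 1))
      (-(Real.eulerMascheroniConstant : ℂ)) 0 := by
    have h0 := hasDerivAt_complexGamma_one
    rw [show (1 : ℂ) = 0 + 1 by ring] at h0
    exact h0.comp_add_const 0 1
  have hq : HasDerivAt (fun s : ℂ => Complex.exp (s * (Real.log η : ℂ)))
      ((Real.log η : ℂ)) 0 := by
    have h1 : HasDerivAt (fun s : ℂ => s * (Real.log η : ℂ)) ((Real.log η : ℂ)) 0 := by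
      simpa using (hasDerivAt_id (0:ℂ)).mul_const ((Real.log η : ℂ))
    have h2 := h1.cexp
    simpa using h2
  have hG : HasDerivAt (fun s : ℂ => Complex.Gamma (s + 1) * Complex.exp (s * (Real.log η : ℂ))
      * hurwitzZeta (↑a : UnitAddCircle) s)
      (((-(Real.eulerMascheroniConstant : ℂ)) * 1 + 1 * (Real.log η : ℂ)) * (1 / 2 - (a : ℂ))
        + 1 * 1 * ((Real.log (Real.Gamma a) - Real.log (2 * Real.pi) / 2 : ℝ) : ℂ)) 0 := by
    have h := (hp.fun_mul hq).mul hZd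
    simp only [zero_add, Complex.Gamma_one, zero_mul, Complex.exp_zero, hZ0] at h
    refine h.congr_deriv ?_; ring_nf
  set D : ℂ := ((-(Real.eulerMascheroniConstant : ℂ)) * 1 + 1 * (Real.log η : ℂ))
      * (1 / 2 - (a : ℂ))
      + 1 * 1 * ((Real.log (Real.Gamma a) - Real.log (2 * Real.pi) / 2 : ℝ) : ℂ) with hDdef
  have hDval : D = ((Real.log (Real.Gamma (η * x))
      + (η * x - 1 / 2) * (Real.eulerMascheroniConstant - Real.log η)
      - (1 / 2) * Real.log (2 * Real.pi) : ℝ) : ℂ) := by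
    rw [hDdef, hadef]
    push_cast
    ring
  have hslope := hasDerivAt_iff_tendsto_slope.mp hG
  rw [hDval] at hslope
  apply hslope.congr'
  rw [eventuallyEq_iff_exists_mem]
  refine ⟨{s : ℂ | s ≠ 0}, self_mem_nhdsWithin, fun s hs => ?_⟩
  have hs0 : (s : ℂ) ≠ 0 := hs
  have hGamma : Complex.Gamma s = Complex.Gamma (s + 1) / s := by
    rw [Complex.Gamma_add_one s hs0, mul_comm, mul_div_assoc, div_self hs0, mul_one]
  have hG0 : Complex.Gamma (0 + 1) * Complex.exp ((0:ℂ) * (Real.log η : ℂ))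
      * hurwitzZeta (↑a : UnitAddCircle) 0 = 1 / 2 - (a : ℂ) := by
    simp [Complex.Gamma_one, hZ0]
  rw [slope_def_field, hG0, sub_zero]
  show _ = Complex.Gamma s * Complex.exp (s * (Real.log η : ℂ))
      * hurwitzZeta (↑a : UnitAddCircle) s - (1 / 2 - (a : ℂ)) / s
  rw [hGamma]
  field_simp

end RMBC

/-- Regularized Mellin evaluation of the boson contraction: for real `η > 0`, `x > 0` with
`η·x < 1`, the function `s ↦ Γ(s) η^s ζ(s, ηx) - (1/2 - ηx)/s` tends, as `s → 0` along
nonzero `s`, to `log Γ(ηx) + (ηx - 1/2)(γ_EM - log η) - (1/2) log(2π)`. Here `ζ(s, a)` is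
the Hurwitz zeta function, `η^s = exp(s · log η)` with `log η` real, and `γ_EM` is the
Euler–Mascheroni constant. This is the finite part at `s = 0` asserted by the regularized
formula `∫_C (ln(-λ)/(2πiλ)) e^{-xλ}/(1 - e^{-λ/η}) dλ
  = ln Γ(ηx) + (ηx - 1/2)(γ - ln η) - (1/2) ln 2π`. -/
theorem regularized_mellin_boson_contraction (η x : ℝ) (hη : 0 < η) (hx : 0 < x)
    (hηx : η * x < 1) :
    Tendsto
      (fun s : ℂ =>
        Complex.Gamma s * Complex.exp (s * (Real.log η : ℂ))
            * hurwitzZeta (↑(η * x) : UnitAddCircle) s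
          - ((1 / 2 : ℂ) - (η * x : ℝ)) / s)
      (𝓝[≠] 0)
      (𝓝 ((Real.log (Real.Gamma (η * x))
          + (η * x - 1 / 2) * (Real.eulerMascheroniConstant - Real.log η)
          - (1 / 2) * Real.log (2 * Real.pi) : ℝ) : ℂ)) :=
  RMBC.main η x hη hx hηx
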